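/- Let K be a finite set of positive integers with minimum K₋ and maximum K₊, and fix k ∈ K. Then ∑_{ℓ∈K, ℓ≠k} gcd(k,ℓ)²/(kℓ) ≤ 2 log(K₊/K₋) · σ_{−1}(k), where σ_{−1}(k) = ∑_{d|k} 1/d. -/

import Mathlib

open Finset

/-- Harmonic sum bound: ∑_{A ≤ m < B} 1/m ≤ 2 (log B - log A). -/
lemma sum_inv_Ico_le (A B : ℕ) (hA : 1 ≤ A) (hAB : A ≤ B) :
    ∑ m ∈ Finset.Ico A B, (m : ℝ)⁻¹ ≤ 2 * (Real.log B - Real.log A) := by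
  induction B, hAB using Nat.le_induction with
  | base => simp
  | succ B hAB ih =>
    have hB1 : (1:ℝ) ≤ (B:ℝ) := by exact_mod_cast hA.trans hAB
    have hBpos : (0:ℝ) < B := by linarith
    have hstep : (B:ℝ)⁻¹ ≤ 2 * (Real.log ((B:ℝ)+1) - Real.log B) := by
      have h := Real.log_le_sub_one_of_pos (x := (B:ℝ)/((B:ℝ)+1)) (by positivity)
      rw [Real.log_div (by linarith) (by linarith)] at h
      have hlog : 1/((B:ℝ)+1) ≤ Real.log ((B:ℝ)+1) - Real.log B := by
        have : (B:ℝ)/((B:ℝ)+1) - 1 = -(1/((B:ℝ)+1)) := by field_simp; ring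
        linarith [this ▸ h]
      have h3 : (B:ℝ)⁻¹ ≤ 2 * (1/((B:ℝ)+1)) := by
        rw [inv_eq_one_div, mul_one_div, div_le_div_iff₀ hBpos (by linarith)]
        nlinarith
      linarith
    rw [Finset.sum_Ico_succ_top hAB]
    push_cast
    linarith

/-- If T ∪ {m₀} is a set of distinct positive integers contained in [a,b] and m₀ ∉ T,
then ∑_{m ∈ T} 1/m ≤ 2 (log b - log a). -/
lemma sum_inv_avoid_le (T : Finset ℕ) (m₀ : ℕ) (hm₀ : m₀ ∉ T)
    (a b : ℝ) (ha : 0 < a)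
    (hbound : ∀ m ∈ insert m₀ T, a ≤ (m:ℝ) ∧ (m:ℝ) ≤ b) :
    ∑ m ∈ T, (m : ℝ)⁻¹ ≤ 2 * (Real.log b - Real.log a) := by
  set U := insert m₀ T with hU
  have hUne : U.Nonempty := ⟨m₀, mem_insert_self _ _⟩
  set A := U.min' hUne with hAdef
  set B := U.max' hUne with hBdef
  have hAmem : A ∈ U := U.min'_mem hUne
  have hBmem : B ∈ U := U.max'_mem hUne
  have hAa : a ≤ (A:ℝ) := (hbound A hAmem).1
  have hBb : (B:ℝ) ≤ b := (hbound B hBmem).2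
  have hApos : 0 < A := by
    have : (0:ℝ) < (A:ℝ) := lt_of_lt_of_le ha hAa
    exact_mod_cast this
  have hAB : A ≤ B := U.min'_le B hBmem
  have hm₀A : A ≤ m₀ := U.min'_le m₀ (mem_insert_self _ _)
  have hm₀B : m₀ ≤ B := U.le_max' m₀ (mem_insert_self _ _)
  have hm₀pos : 0 < m₀ := lt_of_lt_of_le hApos hm₀A
  have hBpos : (0:ℝ) < (B:ℝ) := by
    have : 0 < B := lt_of_lt_of_le hApos hAB
    exact_mod_cast this
  have hTsub : T ⊆ (Finset.Icc A B).erase m₀ := by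
    intro m hm
    rw [mem_erase, mem_Icc]
    exact ⟨fun h => hm₀ (h ▸ hm),
      U.min'_le m (mem_insert_of_mem hm), U.le_max' m (mem_insert_of_mem hm)⟩
  have step1 : ∑ m ∈ T, (m : ℝ)⁻¹ ≤ ∑ m ∈ (Finset.Icc A B).erase m₀, (m : ℝ)⁻¹ :=
    Finset.sum_le_sum_of_subset_of_nonneg hTsub (fun m _ _ => by positivity)
  have step2 : ∑ m ∈ (Finset.Icc A B).erase m₀, (m : ℝ)⁻¹
      = (∑ m ∈ Finset.Icc A B, (m : ℝ)⁻¹) - (m₀:ℝ)⁻¹ :=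
    Finset.sum_erase_eq_sub (mem_Icc.mpr ⟨hm₀A, hm₀B⟩)
  have step3 : ∑ m ∈ Finset.Icc A B, (m : ℝ)⁻¹
      = (∑ m ∈ Finset.Ico A B, (m : ℝ)⁻¹) + (B:ℝ)⁻¹ := by
    rw [← Finset.Ico_add_one_right_eq_Icc, Finset.sum_Ico_succ_top hAB]
  have hinv : (B:ℝ)⁻¹ ≤ (m₀:ℝ)⁻¹ := by
    apply inv_anti₀
    · exact_mod_cast hm₀pos
    · exact_mod_cast hm₀B
  have step4 : ∑ m ∈ Finset.Ico A B, (m : ℝ)⁻¹ ≤ 2 * (Real.log B - Real.log A) :=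
    sum_inv_Ico_le A B hApos hAB
  have hlogB : Real.log B ≤ Real.log b := Real.log_le_log hBpos hBb
  have hlogA : Real.log a ≤ Real.log A := Real.log_le_log ha hAa
  linarith

/-- For a divisor d of k, the sum of d/l over multiples of d in K (other than k)
is at most 2(log K₊ - log K₋). -/
lemma sum_div_multiples_le (K : Finset ℕ) (hK : K.Nonempty) (hpos : ∀ k ∈ K, 0 < k)
    (k : ℕ) (hk : k ∈ K) (d : ℕ) (hd : d ∣ k) (hdpos : 0 < d) :
    ∑ l ∈ (K.erase k).filter (d ∣ ·), (d : ℝ) / l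
      ≤ 2 * (Real.log (K.max' hK) - Real.log (K.min' hK)) := by
  set S := (K.erase k).filter (d ∣ ·) with hSdef
  have hS : ∀ l ∈ S, l ∈ K ∧ l ≠ k ∧ d ∣ l := by
    intro l hl
    rw [hSdef, mem_filter, mem_erase] at hl
    exact ⟨hl.1.2, hl.1.1, hl.2⟩
  have hdR : (0:ℝ) < (d:ℝ) := by exact_mod_cast hdpos
  -- reindex by m = l / d
  have hinj : ∀ x ∈ S, ∀ y ∈ S, x / d = y / d → x = y := by
    intro x hx y hy hxy
    have hdx := (hS x hx).2.2
    have hdy := (hS y hy).2.2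
    calc x = x / d * d := (Nat.div_mul_cancel hdx).symm
      _ = y / d * d := by rw [hxy]
      _ = y := Nat.div_mul_cancel hdy
  have hsum : ∑ l ∈ S, (d : ℝ) / l = ∑ m ∈ S.image (· / d), (m : ℝ)⁻¹ := by
    rw [Finset.sum_image hinj]
    apply Finset.sum_congr rfl
    intro l hl
    obtain ⟨hlK, _, hdl⟩ := hS l hl
    have hlpos := hpos l hlK
    rw [Nat.cast_div hdl (by exact_mod_cast hdpos.ne')]
    rw [inv_div]
  rw [hsum]
  have hminK : K.min' hK ∈ K := K.min'_mem hK
  have hmaxK : K.max' hK ∈ K := K.max'_mem hK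
  have hminpos : (0:ℝ) < (K.min' hK : ℝ) := by exact_mod_cast hpos _ hminK
  have hmaxpos : (0:ℝ) < (K.max' hK : ℝ) := by exact_mod_cast hpos _ hmaxK
  -- bound for any element of K divisible by d
  have key : ∀ x ∈ K, d ∣ x →
      (K.min' hK : ℝ)/(d:ℝ) ≤ ((x / d : ℕ):ℝ) ∧ ((x / d : ℕ):ℝ) ≤ (K.max' hK : ℝ)/(d:ℝ) := by
    intro x hx hdx
    rw [Nat.cast_div hdx (by exact_mod_cast hdpos.ne')]
    constructor
    · apply div_le_div_of_nonneg_right _ hdR.le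
      exact_mod_cast K.min'_le x hx
    · apply div_le_div_of_nonneg_right _ hdR.le
      exact_mod_cast K.le_max' x hx
  have hm₀notmem : k / d ∉ S.image (· / d) := by
    intro h
    rw [Finset.mem_image] at h
    obtain ⟨l, hl, hld⟩ := h
    obtain ⟨hlK, hlk, hdl⟩ := hS l hl
    apply hlk
    calc l = l / d * d := (Nat.div_mul_cancel hdl).symm
      _ = k / d * d := by rw [hld]
      _ = k := Nat.div_mul_cancel hd
  have hbound : ∀ m ∈ insert (k / d) (S.image (· / d)),
      (K.min' hK : ℝ)/(d:ℝ) ≤ (m:ℝ) ∧ (m:ℝ) ≤ (K.max' hK : ℝ)/(d:ℝ) := by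
    intro m hm
    rw [Finset.mem_insert] at hm
    rcases hm with hm | hm
    · subst hm; exact key k hk hd
    · rw [Finset.mem_image] at hm
      obtain ⟨l, hl, hld⟩ := hm
      obtain ⟨hlK, _, hdl⟩ := hS l hl
      subst hld
      exact key l hlK hdl
  have := sum_inv_avoid_le (S.image (· / d)) (k / d) hm₀notmem
    ((K.min' hK : ℝ)/(d:ℝ)) ((K.max' hK : ℝ)/(d:ℝ)) (by positivity) hbound
  calc ∑ m ∈ S.image (· / d), (m : ℝ)⁻¹
      ≤ 2 * (Real.log ((K.max' hK : ℝ)/(d:ℝ)) - Real.log ((K.min' hK : ℝ)/(d:ℝ))) := this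
    _ = 2 * (Real.log (K.max' hK) - Real.log (K.min' hK)) := by
        rw [Real.log_div hmaxpos.ne' hdR.ne', Real.log_div hminpos.ne' hdR.ne']
        ring

theorem gcd_row_sum_bound (K : Finset ℕ) (hK : K.Nonempty) (hpos : ∀ k ∈ K, 0 < k)
    (k : ℕ) (hk : k ∈ K) :
    ∑ l ∈ K.erase k, (Nat.gcd k l : ℝ) ^ 2 / ((k : ℝ) * (l : ℝ))
      ≤ 2 * Real.log ((K.max' hK : ℝ) / (K.min' hK : ℝ)) * ∑ d ∈ k.divisors, (d : ℝ)⁻¹ := by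
  have hkpos := hpos k hk
  have hkR : (0:ℝ) < (k:ℝ) := by exact_mod_cast hkpos
  have hminK : K.min' hK ∈ K := K.min'_mem hK
  have hmaxK : K.max' hK ∈ K := K.max'_mem hK
  have hminpos : (0:ℝ) < (K.min' hK : ℝ) := by exact_mod_cast hpos _ hminK
  have hmaxpos : (0:ℝ) < (K.max' hK : ℝ) := by exact_mod_cast hpos _ hmaxK
  have hlogdiv : Real.log ((K.max' hK : ℝ) / (K.min' hK : ℝ))
      = Real.log (K.max' hK) - Real.log (K.min' hK) :=
    Real.log_div hmaxpos.ne' hminpos.ne'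
  set L := Real.log (K.max' hK) - Real.log (K.min' hK) with hLdef
  have hLnonneg : 0 ≤ L := by
    rw [hLdef]
    have : (K.min' hK : ℝ) ≤ (K.max' hK : ℝ) := by
      exact_mod_cast K.min'_le (K.max' hK) hmaxK
    linarith [Real.log_le_log hminpos this]
  -- Step 1: pointwise bound
  have step1 : ∀ l ∈ K.erase k, (Nat.gcd k l : ℝ) ^ 2 / ((k : ℝ) * (l : ℝ))
      ≤ ∑ d ∈ k.divisors, (if d ∣ l then (d:ℝ)/k * ((d:ℝ)/l) else 0) := by
    intro l hl
    have hlK : l ∈ K := mem_of_mem_erase hl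
    have hlpos := hpos l hlK
    have hlR : (0:ℝ) < (l:ℝ) := by exact_mod_cast hlpos
    have hg : Nat.gcd k l ∈ k.divisors :=
      Nat.mem_divisors.mpr ⟨Nat.gcd_dvd_left _ _, hkpos.ne'⟩
    have hle := Finset.single_le_sum
      (f := fun d => (if d ∣ l then (d:ℝ)/k * ((d:ℝ)/l) else 0))
      (fun d _ => by positivity) hg
    calc (Nat.gcd k l : ℝ) ^ 2 / ((k : ℝ) * (l : ℝ))
        = (Nat.gcd k l : ℝ)/k * ((Nat.gcd k l : ℝ)/l) := by field_simp
      _ ≤ _ := by simpa [Nat.gcd_dvd_right k l] using hle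
  calc ∑ l ∈ K.erase k, (Nat.gcd k l : ℝ) ^ 2 / ((k : ℝ) * (l : ℝ))
      ≤ ∑ l ∈ K.erase k, ∑ d ∈ k.divisors, (if d ∣ l then (d:ℝ)/k * ((d:ℝ)/l) else 0) :=
        Finset.sum_le_sum step1
    _ = ∑ d ∈ k.divisors, ∑ l ∈ K.erase k, (if d ∣ l then (d:ℝ)/k * ((d:ℝ)/l) else 0) :=
        Finset.sum_comm
    _ = ∑ d ∈ k.divisors, (d:ℝ)/k * ∑ l ∈ (K.erase k).filter (d ∣ ·), (d:ℝ)/l := by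
        apply Finset.sum_congr rfl
        intro d _
        rw [Finset.mul_sum, Finset.sum_filter]
    _ ≤ ∑ d ∈ k.divisors, (d:ℝ)/k * (2 * L) := by
        apply Finset.sum_le_sum
        intro d hd
        obtain ⟨hdvd, -⟩ := Nat.mem_divisors.mp hd
        have hdpos : 0 < d := Nat.pos_of_mem_divisors hd
        apply mul_le_mul_of_nonneg_left (sum_div_multiples_le K hK hpos k hk d hdvd hdpos)
        positivity
    _ = 2 * L * ∑ d ∈ k.divisors, (d:ℝ)/k := by
        rw [← Finset.sum_mul]
        ring
    _ = 2 * Real.log ((K.max' hK : ℝ) / (K.min' hK : ℝ)) * ∑ d ∈ k.divisors, (d : ℝ)⁻¹ := by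
        rw [hlogdiv]
        congr 1
        rw [← Nat.sum_div_divisors k (fun d => (d:ℝ)/k)]
        apply Finset.sum_congr rfl
        intro d hd
        obtain ⟨hdvd, -⟩ := Nat.mem_divisors.mp hd
        have hdpos : 0 < d := Nat.pos_of_mem_divisors hd
        rw [Nat.cast_div hdvd (by exact_mod_cast hdpos.ne')]
        rw [div_div, mul_comm, ← div_div, div_self hkR.ne', one_div]
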